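/- Skorohod integral identity for Asian Vega: δ(1_{[0,T]} (∫₀ᵀ X_t W_t dt)/I_{(1)}) = (∫₀ᵀ X_t W_t dt / I_{(1)}) W_T − σ(∫₀ᵀ t X_t W_t dt)/I_{(1)} − 1 + σ(∫₀ᵀ X_t W_t dt) I_{(2)}/I_{(1)}². -/

import Mathlib

open MeasureTheory


section Alg
variable {Ω : Type*}

/-- The quotient rule forces `D F s ω = 0` whenever `F ω = 0`. -/
lemma AV_zero_rule (D : (Ω → ℝ) → ℝ → Ω → ℝ)
    (hquot : ∀ F G : Ω → ℝ, D (fun ω => F ω / G ω)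
      = fun s ω => (G ω * D F s ω - F ω * D G s ω) / (G ω) ^ 2)
    (F : Ω → ℝ) (ω : Ω) (hF : F ω = 0) (s : ℝ) : D F s ω = 0 := by
  classical
  set G : Ω → ℝ := fun ω' => if ω' = ω then 0 else 1 with hG
  have hFG : (fun ω' => F ω' / G ω') = F := by
    funext ω'
    by_cases h : ω' = ω
    · subst h; simp [hG, hF]
    · simp [hG, h]
  have := congrFun (congrFun (hquot F G) s) ω
  rw [hFG] at this
  simpa [hG, hF] using this

end Alg

section Alg2
variable {Ω : Type*}

lemma AV_prod_int (T : ℝ) (D : (Ω → ℝ) → ℝ → Ω → ℝ) (δ : (ℝ → Ω → ℝ) → Ω → ℝ)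
    (hfact : ∀ (F : Ω → ℝ) (u : ℝ → Ω → ℝ),
      δ (fun s ω => F ω * u s ω)
        = fun ω => F ω * δ u ω - ∫ s in (0:ℝ)..T, D F s ω * u s ω)
    (F G : Ω → ℝ) (u : ℝ → Ω → ℝ) (ω : Ω) :
    ∫ s in (0:ℝ)..T, D (fun ω => F ω * G ω) s ω * u s ω
      = F ω * (∫ s in (0:ℝ)..T, D G s ω * u s ω)
        + G ω * ∫ s in (0:ℝ)..T, D F s ω * u s ω := by
  have h1 := congrFun (hfact (fun ω => F ω * G ω) u) ω
  have h2 := congrFun (hfact F (fun s ω => G ω * u s ω)) ω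
  have h3 := congrFun (hfact G u) ω
  have heq : (fun s ω => (F ω * G ω) * u s ω)
      = (fun s ω => F ω * (G ω * u s ω)) := by
    funext s ω; ring
  rw [heq] at h1
  rw [h1] at h2
  have hint : (∫ s in (0:ℝ)..T, D F s ω * (G ω * u s ω))
      = G ω * ∫ s in (0:ℝ)..T, D F s ω * u s ω := by
    rw [← intervalIntegral.integral_const_mul]
    congr 1; funext s; ring
  rw [hint, h3] at h2
  linear_combination -h2
end Alg2


/-- If an integrable function has vanishing integral on every subinterval `Ioc s t` of
`Ioc a b`, then it vanishes a.e. on `Ioc a b`. -/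
lemma AV_ae_zero (a b : ℝ) (f : ℝ → ℝ) (hf : IntegrableOn f (Set.Ioc a b))
    (h : ∀ s t : ℝ, a ≤ s → s ≤ t → t ≤ b → ∫ x in Set.Ioc s t, f x = 0) :
    ∀ᵐ x ∂(volume.restrict (Set.Ioc a b)), f x = 0 := by
  rcases lt_or_ge b a with hba | hab
  · rw [Set.Ioc_eq_empty (by exact fun hlt => absurd hlt (not_lt.mpr hba.le)),
      Measure.restrict_empty]
    simp
  set μ := volume.restrict (Set.Ioc a b) with hμ
  have hfi : Integrable f μ := hf
  set g : ℝ → ℝ := hfi.1.mk f with hgdef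
  have hgsm : StronglyMeasurable g := hfi.1.stronglyMeasurable_mk
  have hgm : Measurable g := hgsm.measurable
  have hfg : f =ᵐ[μ] g := hfi.1.ae_eq_mk
  have hgi : Integrable g μ := hfi.congr hfg
  -- integrals of g over subintervals vanish
  have key : ∀ s t : ℝ, ∫ x in Set.Ioc s t, g x ∂μ = 0 := by
    intro s t
    have h1 : ∫ x in Set.Ioc s t, g x ∂μ = ∫ x in Set.Ioc s t, f x ∂μ :=
      setIntegral_congr_ae measurableSet_Ioc (hfg.mono fun x hx _ => hx.symm)
    rw [h1, hμ, Measure.restrict_restrict measurableSet_Ioc, Set.Ioc_inter_Ioc]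
    rcases le_or_gt (s ⊔ a) (t ⊓ b) with hle | hlt
    · exact h _ _ le_sup_right hle inf_le_right
    · rw [Set.Ioc_eq_empty (not_lt.mpr hlt.le), Measure.restrict_empty, integral_zero_measure]
  -- also over the whole space
  have keyu : ∫ x, g x ∂μ = 0 := by
    have := key a b
    rwa [hμ, Measure.restrict_restrict measurableSet_Ioc, Set.inter_self, ← hμ] at this
  -- two finite measures
  set μ1 := μ.withDensity (fun x => ENNReal.ofReal (g x)) with hμ1
  set μ2 := μ.withDensity (fun x => ENNReal.ofReal (-g x)) with hμ2
  haveI : IsFiniteMeasure μ1 := isFiniteMeasure_withDensity_ofReal hgi.2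
  haveI : IsFiniteMeasure μ2 := isFiniteMeasure_withDensity_ofReal hgi.neg.2
  have hEq : ∀ E : Set ℝ, MeasurableSet E → (∫ x in E, g x ∂μ = 0) → μ1 E = μ2 E := by
    intro E hE hint
    have hrest : Integrable g (μ.restrict E) := hgi.restrict
    have hlin := integral_eq_lintegral_pos_part_sub_lintegral_neg_part hrest
    rw [hint] at hlin
    have h1E : μ1 E = ∫⁻ x in E, ENNReal.ofReal (g x) ∂μ := withDensity_apply _ hE
    have h2E : μ2 E = ∫⁻ x in E, ENNReal.ofReal (-g x) ∂μ := withDensity_apply _ hE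
    have h1top : μ1 E ≠ ⊤ := measure_ne_top μ1 E
    have h2top : μ2 E ≠ ⊤ := measure_ne_top μ2 E
    rw [← h1E, ← h2E] at hlin
    have : (μ1 E).toReal = (μ2 E).toReal := by linarith
    exact (ENNReal.toReal_eq_toReal_iff' h1top h2top).mp this
  have hμν : μ1 = μ2 := by
    refine Measure.ext_of_Ioc_finite μ1 μ2 ?_ fun s t _ => hEq _ measurableSet_Ioc (key s t)
    have h1 : μ1 Set.univ = μ2 Set.univ → μ1 Set.univ = μ2 Set.univ := id
    refine hEq Set.univ MeasurableSet.univ ?_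
    rw [Measure.restrict_univ]; exact keyu
  -- conclude g = 0 a.e.
  have hgle : ∀ᵐ x ∂μ, g x ≤ 0 := by
    set E := {x | 0 < g x} with hE
    have hEm : MeasurableSet E := measurableSet_lt measurable_const hgm
    have h2 : μ2 E = 0 := by
      rw [hμ2, withDensity_apply _ hEm]
      have hz : ∫⁻ x in E, ENNReal.ofReal (-g x) ∂μ = ∫⁻ x in E, 0 ∂μ := by
        refine setLIntegral_congr_fun hEm (fun x hx => ?_)
        have hx' : 0 < g x := hx
        simp only [ENNReal.ofReal_eq_zero]
        linarith
      rw [hz]; simp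
    have h1 : μ1 E = 0 := by rw [hμν]; exact h2
    rw [hμ1, withDensity_apply _ hEm] at h1
    have hae := (setLIntegral_eq_zero_iff hEm hgm.ennreal_ofReal).mp h1
    refine hae.mono fun x hx => ?_
    by_contra hpos
    push_neg at hpos
    have := hx hpos
    simp only [ENNReal.ofReal_eq_zero] at this
    exact absurd this (not_le.mpr hpos)
  have hgge : ∀ᵐ x ∂μ, 0 ≤ g x := by
    set E := {x | g x < 0} with hE
    have hEm : MeasurableSet E := measurableSet_lt hgm measurable_const
    have h1 : μ1 E = 0 := by
      rw [hμ1, withDensity_apply _ hEm]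
      have hz : ∫⁻ x in E, ENNReal.ofReal (g x) ∂μ = ∫⁻ x in E, 0 ∂μ := by
        refine setLIntegral_congr_fun hEm (fun x hx => ?_)
        have hx' : g x < 0 := hx
        simp only [ENNReal.ofReal_eq_zero]
        linarith
      rw [hz]; simp
    have h2 : μ2 E = 0 := by rw [← hμν]; exact h1
    rw [hμ2, withDensity_apply _ hEm] at h2
    have hae := (setLIntegral_eq_zero_iff hEm hgm.neg.ennreal_ofReal).mp h2
    refine hae.mono fun x hx => ?_
    by_contra hneg
    push_neg at hneg
    have := hx hneg
    simp only [ENNReal.ofReal_eq_zero, Pi.neg_apply, neg_nonpos] at this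
    linarith
  have hg0 : ∀ᵐ x ∂μ, g x = 0 := by
    filter_upwards [hgle, hgge] with x h1 h2
    linarith
  filter_upwards [hfg, hg0] with x h1 h2
  rw [h1, h2]


/-- Triangle Fubini: if `t ↦ t * f t` is interval integrable on `[0,T]`,
then `s ↦ ∫ₛᵀ f` is interval integrable and `∫₀ᵀ (∫ₛᵀ f) ds = ∫₀ᵀ t f t dt`. -/
lemma AV_fubini (T : ℝ) (hT : 0 < T) (f : ℝ → ℝ)
    (hf : IntervalIntegrable (fun t => t * f t) volume 0 T) :
    IntervalIntegrable (fun s => ∫ t in s..T, f t) volume 0 T ∧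
      (∫ s in (0:ℝ)..T, ∫ t in s..T, f t) = ∫ t in (0:ℝ)..T, t * f t := by
  set ν := volume.restrict (Set.Ioc (0:ℝ) T) with hν
  have hfi : IntegrableOn (fun t => t * f t) (Set.Ioc 0 T) :=
    (intervalIntegrable_iff_integrableOn_Ioc_of_le hT.le).mp hf
  -- f is a.e. strongly measurable w.r.t. ν
  have hae_pos : ∀ᵐ t ∂ν, 0 < t := by
    rw [hν, ae_restrict_iff' measurableSet_Ioc]
    exact Filter.Eventually.of_forall fun t ht => ht.1
  have hcongr : (fun t => t⁻¹ * (t * f t)) =ᵐ[ν] f := by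
    filter_upwards [hae_pos] with t ht
    field_simp
  have hfm : AEStronglyMeasurable f ν := by
    refine AEStronglyMeasurable.congr ?_ hcongr
    exact (measurable_inv.aestronglyMeasurable).mul hfi.1
  -- local integrability of f away from 0
  have hloc : ∀ s : ℝ, 0 < s → IntegrableOn f (Set.Ioc s T) := by
    intro s hs
    have hsub : IntegrableOn (fun t => t * f t) (Set.Ioc s T) :=
      hfi.mono_set (Set.Ioc_subset_Ioc_left hs.le)
    have hmul : IntegrableOn (fun t => t⁻¹ * (t * f t)) (Set.Ioc s T) := by
      refine Integrable.bdd_mul (c := s⁻¹) hsub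
        (measurable_inv.aestronglyMeasurable) ?_
      rw [ae_restrict_iff' measurableSet_Ioc]
      refine Filter.Eventually.of_forall fun t ht => ?_
      rw [Real.norm_eq_abs, abs_inv, abs_of_pos (hs.trans_le ht.1.le)]
      exact inv_anti₀ hs ht.1.le
    refine hmul.congr_fun_ae ?_
    filter_upwards [ae_restrict_mem measurableSet_Ioc] with t ht
    field_simp [(hs.trans_le ht.1.le).ne']
  -- the kernel on the product space
  set Φ : ℝ × ℝ → ℝ :=
    fun p => Set.indicator {q : ℝ × ℝ | q.1 < q.2} (fun q => f q.2) p with hΦ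
  have hSmeas : MeasurableSet {q : ℝ × ℝ | q.1 < q.2} :=
    measurableSet_lt measurable_fst measurable_snd
  have hΦm : AEStronglyMeasurable Φ (ν.prod ν) :=
    (hfm.comp_snd).indicator hSmeas
  have hΦint : Integrable Φ (ν.prod ν) := by
    refine ⟨hΦm, ?_⟩
    rw [hasFiniteIntegral_def]
    rw [lintegral_prod_symm _ hΦm.enorm]
    simp only [enorm_eq_nnnorm]
    have hinner : ∀ t ∈ Set.Ioc (0:ℝ) T,
        (∫⁻ s, (‖Φ (s, t)‖₊ : ENNReal) ∂ν) = (‖f t‖₊ : ENNReal) * ENNReal.ofReal t := by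
      intro t ht
      have h1 : (fun s => (‖Φ (s, t)‖₊ : ENNReal))
          = Set.indicator (Set.Iio t) (fun _ => (‖f t‖₊ : ENNReal)) := by
        funext s
        by_cases hst : s < t
        · have h2 : Φ (s, t) = f t := Set.indicator_of_mem (by exact hst) _
          rw [Set.indicator_of_mem (Set.mem_Iio.mpr hst), h2]
        · have h2 : Φ (s, t) = 0 := Set.indicator_of_notMem (by exact hst) _
          rw [Set.indicator_of_notMem (by simpa using hst), h2]
          simp
      rw [h1, lintegral_indicator measurableSet_Iio, setLIntegral_const]
      congr 1
      rw [hν, Measure.restrict_apply measurableSet_Iio]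
      have : Set.Iio t ∩ Set.Ioc 0 T = Set.Ioo 0 t := by
        ext x
        simp only [Set.mem_inter_iff, Set.mem_Iio, Set.mem_Ioc, Set.mem_Ioo]
        constructor
        · rintro ⟨h1, h2, _⟩; exact ⟨h2, h1⟩
        · rintro ⟨h1, h2⟩; exact ⟨h2, h1, (h2.trans_le ht.2).le.trans le_rfl⟩
      rw [this]
      simp [Real.volume_Ioo]
    have hrw : (∫⁻ t, (∫⁻ s, (‖Φ (s, t)‖₊ : ENNReal) ∂ν) ∂ν)
        = ∫⁻ t, (‖t * f t‖₊ : ENNReal) ∂ν := by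
      refine lintegral_congr_ae ?_
      filter_upwards [ae_restrict_mem measurableSet_Ioc] with t ht
      rw [hinner t ht, nnnorm_mul, ENNReal.coe_mul,
        ← enorm_eq_nnnorm t, Real.enorm_eq_ofReal ht.1.le, mul_comm]
    rw [hrw]
    exact hfi.2
  -- identification of the slices
  have hmeasIio : ∀ t ∈ Set.Ioc (0:ℝ) T, ν (Set.Iio t) = ENNReal.ofReal t := by
    intro t ht
    rw [hν, Measure.restrict_apply measurableSet_Iio]
    have : Set.Iio t ∩ Set.Ioc 0 T = Set.Ioo 0 t := by
      ext x
      simp only [Set.mem_inter_iff, Set.mem_Iio, Set.mem_Ioc, Set.mem_Ioo]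
      constructor
      · rintro ⟨h1, h2, _⟩; exact ⟨h2, h1⟩
      · rintro ⟨h1, h2⟩; exact ⟨h2, h1, h2.le.trans ht.2⟩
    rw [this]
    simp [Real.volume_Ioo]
  have hslice : ∀ s ∈ Set.Ioc (0:ℝ) T, (∫ t, Φ (s, t) ∂ν) = ∫ t in s..T, f t := by
    intro s hs
    have h1 : (fun t => Φ (s, t)) = Set.indicator (Set.Ioi s) f := by
      funext t
      by_cases hst : s < t
      · rw [Set.indicator_of_mem (Set.mem_Ioi.mpr hst)]
        exact Set.indicator_of_mem (by exact hst) _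
      · rw [Set.indicator_of_notMem (by simpa using hst)]
        exact Set.indicator_of_notMem (by exact hst) _
    rw [h1, integral_indicator measurableSet_Ioi, hν,
      Measure.restrict_restrict measurableSet_Ioi]
    have h2 : Set.Ioi s ∩ Set.Ioc 0 T = Set.Ioc s T := by
      ext x
      simp only [Set.mem_inter_iff, Set.mem_Ioi, Set.mem_Ioc]
      constructor
      · rintro ⟨h3, _, h4⟩; exact ⟨h3, h4⟩
      · rintro ⟨h3, h4⟩; exact ⟨h3, hs.1.trans h3, h4⟩
    rw [h2, intervalIntegral.integral_of_le hs.2]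
  have hslice2 : ∀ t ∈ Set.Ioc (0:ℝ) T, (∫ s, Φ (s, t) ∂ν) = t * f t := by
    intro t ht
    have h1 : (fun s => Φ (s, t)) = Set.indicator (Set.Iio t) (fun _ => f t) := by
      funext s
      by_cases hst : s < t
      · rw [Set.indicator_of_mem (Set.mem_Iio.mpr hst)]
        exact Set.indicator_of_mem (by exact hst) _
      · rw [Set.indicator_of_notMem (by simpa using hst)]
        exact Set.indicator_of_notMem (by exact hst) _
    rw [h1, integral_indicator measurableSet_Iio, setIntegral_const,
      measureReal_def, hmeasIio t ht, ENNReal.toReal_ofReal ht.1.le, smul_eq_mul]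
  -- marginal integrability
  have hmarg : Integrable (fun s => ∫ t, Φ (s, t) ∂ν) ν := hΦint.integral_prod_left
  have haeEq : (fun s => ∫ t, Φ (s, t) ∂ν) =ᵐ[ν] fun s => ∫ t in s..T, f t := by
    filter_upwards [ae_restrict_mem measurableSet_Ioc] with s hs
    exact hslice s hs
  constructor
  · rw [intervalIntegrable_iff_integrableOn_Ioc_of_le hT.le]
    exact (hmarg.congr haeEq : Integrable _ ν)
  · have hswap : (∫ s, (∫ t, Φ (s, t) ∂ν) ∂ν) = ∫ t, (∫ s, Φ (s, t) ∂ν) ∂ν :=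
      integral_integral_swap (f := fun s t => Φ (s, t)) hΦint
    have hL : (∫ s in (0:ℝ)..T, ∫ t in s..T, f t)
        = ∫ s, (∫ t, Φ (s, t) ∂ν) ∂ν := by
      rw [intervalIntegral.integral_of_le hT.le]
      exact (integral_congr_ae haeEq).symm
    have hR : (∫ t in (0:ℝ)..T, t * f t) = ∫ t, (∫ s, Φ (s, t) ∂ν) ∂ν := by
      rw [intervalIntegral.integral_of_le hT.le]
      refine (integral_congr_ae ?_).symm
      filter_upwards [ae_restrict_mem measurableSet_Ioc] with t ht
      exact hslice2 t ht
    rw [hL, hR, hswap]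


/-- Local integrability away from `0` from integrability of `t * f t`. -/
lemma AV_loc (T : ℝ) (f : ℝ → ℝ)
    (hf : IntegrableOn (fun t => t * f t) (Set.Ioc 0 T))
    {s : ℝ} (hs : 0 < s) : IntegrableOn f (Set.Ioc s T) := by
  have hsub : IntegrableOn (fun t => t * f t) (Set.Ioc s T) :=
    hf.mono_set (Set.Ioc_subset_Ioc_left hs.le)
  have hmul : IntegrableOn (fun t => t⁻¹ * (t * f t)) (Set.Ioc s T) := by
    refine Integrable.bdd_mul (c := s⁻¹) hsub
      (measurable_inv.aestronglyMeasurable) ?_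
    rw [ae_restrict_iff' measurableSet_Ioc]
    refine Filter.Eventually.of_forall fun t ht => ?_
    rw [Real.norm_eq_abs, abs_inv, abs_of_pos (hs.trans_le ht.1.le)]
    exact inv_anti₀ hs ht.1.le
  refine hmul.congr_fun_ae ?_
  filter_upwards [ae_restrict_mem measurableSet_Ioc] with t ht
  field_simp [(hs.trans_le ht.1.le).ne']

/-- Gluing a.e. statements along a countable family covering `A`. -/
lemma AV_ae_glue (p : ℝ → Prop) (A : Set ℝ) (hA : MeasurableSet A) (S : ℕ → Set ℝ)
    (hSm : ∀ n, MeasurableSet (S n)) (hsub : A ⊆ ⋃ n, S n)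
    (h : ∀ n, ∀ᵐ x ∂(volume.restrict (S n)), p x) :
    ∀ᵐ x ∂(volume.restrict A), p x := by
  have hn : ∀ n, volume ({x | ¬ p x} ∩ S n) = 0 := fun n => by
    have := (ae_iff).mp (h n)
    rwa [Measure.restrict_apply' (hSm n)] at this
  rw [ae_iff, Measure.restrict_apply' hA]
  refine measure_mono_null ?_ (measure_iUnion_null fun n => hn n)
  rintro x ⟨hx1, hx2⟩
  obtain ⟨n, hn'⟩ := Set.mem_iUnion.mp (hsub hx2)
  exact Set.mem_iUnion.mpr ⟨n, hx1, hn'⟩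

/-- Covering `Ioc a b` by tails. -/
lemma AV_cover_tail (a b : ℝ) (hab : a < b) :
    Set.Ioc a b ⊆ ⋃ n : ℕ, Set.Ioc (a + (b - a) / (n + 1)) b := by
  intro x hx
  obtain ⟨n, hn⟩ := exists_nat_gt ((b - a) / (x - a))
  refine Set.mem_iUnion.mpr ⟨n, ?_, hx.2⟩
  have hxa : 0 < x - a := sub_pos.mpr hx.1
  have hba : 0 < b - a := sub_pos.mpr hab
  have h1 : (b - a) / (x - a) < n + 1 := hn.trans_le (by linarith)
  have h2 : (b - a) / (n + 1) < x - a := by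
    rw [div_lt_iff₀ (by positivity)] at h1 ⊢
    · linarith [h1]
  linarith

/-- Covering `Ioo a c` by initial segments. -/
lemma AV_cover_init (a c : ℝ) (hac : a < c) :
    Set.Ioo a c ⊆ ⋃ n : ℕ, Set.Ioc a (c - (c - a) / (n + 1)) := by
  intro x hx
  obtain ⟨n, hn⟩ := exists_nat_gt ((c - a) / (c - x))
  refine Set.mem_iUnion.mpr ⟨n, hx.1, ?_⟩
  have hxc : 0 < c - x := sub_pos.mpr hx.2
  have hca : 0 < c - a := sub_pos.mpr hac
  have h1 : (c - a) / (c - x) < n + 1 := hn.trans_le (by linarith)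
  have h2 : (c - a) / (n + 1) < c - x := by
    rw [div_lt_iff₀ (by positivity)] at h1 ⊢
    linarith [h1]
  linarith

/-- On a right tail where `fw` is locally integrable, `σ fw + f = 0` a.e. -/
lemma AV_tail_ae (T σ a : ℝ) (ha : 0 ≤ a) (haT : a < T) (f w : ℝ → ℝ)
    (htf : IntegrableOn (fun t => t * f t) (Set.Ioc 0 T))
    (hJ : ∀ s, a < s → s ≤ T → IntegrableOn (fun t => f t * w t) (Set.Ioc s T))
    (hzero : ∀ s ∈ Set.Icc (0:ℝ) T,
      σ * (∫ t in s..T, f t * w t) + (∫ t in s..T, f t) = 0) :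
    ∀ᵐ x ∂(volume.restrict (Set.Ioc a T)), σ * (f x * w x) + f x = 0 := by
  refine AV_ae_glue _ _ measurableSet_Ioc (fun n => Set.Ioc (a + (T - a) / (n + 1)) T)
    (fun n => measurableSet_Ioc) (AV_cover_tail a T haT) ?_
  intro n
  set s : ℝ := a + (T - a) / (n + 1) with hsdef
  have hTa : 0 < T - a := sub_pos.mpr haT
  have has : a < s := by
    rw [hsdef]; nlinarith [div_pos hTa (by positivity : (0:ℝ) < (n:ℝ) + 1)]
  have hs0 : 0 < s := lt_of_le_of_lt ha has
  have hsT : s ≤ T := by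
    rw [hsdef]
    have : (T - a) / (n + 1) ≤ (T - a) / 1 := by
      apply div_le_div_of_nonneg_left hTa.le zero_lt_one
      · linarith [Nat.cast_nonneg (α := ℝ) n]
    simp at this
    linarith
  -- interval integrability of everything on [u, T] for u ≥ s
  have hIIf : ∀ u, s ≤ u → u ≤ T → IntervalIntegrable f volume u T := fun u hu huT =>
    (intervalIntegrable_iff_integrableOn_Ioc_of_le huT).mpr
      ((AV_loc T f htf (hs0.trans_le hu)))
  have hIIfw : ∀ u, s ≤ u → u ≤ T → IntervalIntegrable (fun t => f t * w t) volume u T :=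
    fun u hu huT => (intervalIntegrable_iff_integrableOn_Ioc_of_le huT).mpr
      (hJ u (has.trans_le hu) huT)
  refine AV_ae_zero s T (fun t => σ * (f t * w t) + f t)
    ((((hJ s has hsT).const_mul σ)).add (AV_loc T f htf hs0)) ?_
  intro u v hsu huv hvT
  have huT : u ≤ T := huv.trans hvT
  have hu0 : (0:ℝ) ≤ u := (hs0.trans_le hsu).le
  -- turn into interval integrals
  have hIfuv : IntervalIntegrable f volume u v :=
    (intervalIntegrable_iff_integrableOn_Ioc_of_le huv).mpr
      ((AV_loc T f htf (hs0.trans_le hsu)).mono_set (Set.Ioc_subset_Ioc_right hvT))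
  have hIfwuv : IntervalIntegrable (fun t => f t * w t) volume u v :=
    (intervalIntegrable_iff_integrableOn_Ioc_of_le huv).mpr
      ((hJ u (has.trans_le hsu) huT).mono_set (Set.Ioc_subset_Ioc_right hvT))
  have hsplitf := intervalIntegral.integral_add_adjacent_intervals hIfuv (hIIf v (hsu.trans huv) hvT)
  have hsplitfw := intervalIntegral.integral_add_adjacent_intervals hIfwuv (hIIfw v (hsu.trans huv) hvT)
  have hzu := hzero u ⟨hu0, huT⟩
  have hzv := hzero v ⟨hu0.trans huv, hvT⟩
  have hIoc : (∫ x in Set.Ioc u v, (σ * (f x * w x) + f x))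
      = ∫ x in u..v, (σ * (f x * w x) + f x) := (intervalIntegral.integral_of_le huv).symm
  rw [hIoc, intervalIntegral.integral_add (hIfwuv.const_mul σ) hIfuv,
    intervalIntegral.integral_const_mul]
  linear_combination σ * hsplitfw + hsplitf + hzu - hzv

/-- Branch II is impossible. -/
lemma AV_branchII (T σ : ℝ) (hT : 0 < T) (hσ : σ ≠ 0) (f w : ℝ → ℝ)
    (htf : IntegrableOn (fun t => t * f t) (Set.Ioc 0 T))
    (hnt : ¬ IntegrableOn (fun t => t * (f t * w t)) (Set.Ioc 0 T))
    (hzero : ∀ s ∈ Set.Icc (0:ℝ) T,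
      σ * (∫ t in s..T, f t * w t) + (∫ t in s..T, f t) = 0) :
    False := by
  set fw : ℝ → ℝ := fun t => f t * w t with hfwdef
  by_cases hall : ∀ s, 0 < s → s ≤ T → IntegrableOn fw (Set.Ioc s T)
  · -- then σ fw + f = 0 a.e. on (0, T], so t*fw is integrable: contradiction
    have hae := AV_tail_ae T σ 0 le_rfl hT f w htf hall hzero
    refine hnt ?_
    have h1 : IntegrableOn (fun t => -σ⁻¹ * (t * f t)) (Set.Ioc 0 T) := htf.const_mul _
    refine h1.congr_fun_ae ?_
    filter_upwards [hae] with x hx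
    have hfx : f x * w x = -σ⁻¹ * f x := by
      field_simp
      linarith
    rw [hfx]
    ring
  · push_neg at hall
    obtain ⟨b, hb1, hb2, hb3⟩ := hall
    set B : Set ℝ := {s | 0 < s ∧ s ≤ T ∧ ¬ IntegrableOn fw (Set.Ioc s T)} with hBdef
    have hBne : B.Nonempty := ⟨b, hb1, hb2, hb3⟩
    have hBbd : BddAbove B := ⟨T, fun x hx => hx.2.1⟩
    set s₀ : ℝ := sSup B with hs₀def
    have hs₀pos : 0 < s₀ := lt_of_lt_of_le hb1 (le_csSup hBbd ⟨hb1, hb2, hb3⟩)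
    have hs₀T : s₀ ≤ T := csSup_le hBne fun x hx => hx.2.1
    have hnJ : ∀ s, 0 < s → s < s₀ → ¬ IntegrableOn fw (Set.Ioc s T) := by
      intro s hs hss₀ hint
      obtain ⟨b', hb', hsb'⟩ := exists_lt_of_lt_csSup hBne hss₀
      exact hb'.2.2 (hint.mono_set (Set.Ioc_subset_Ioc_left hsb'.le))
    by_cases hJ0 : IntegrableOn fw (Set.Ioc s₀ T)
    · -- f = 0 a.e. below s₀; then fw integrable on (s₀/2, T]: contradiction
      have hk0 : ∀ s, 0 < s → s < s₀ → (∫ t in s..T, f t) = 0 := by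
        intro s hs hss₀
        have hsT : s ≤ T := hss₀.le.trans hs₀T
        have hg0 : (∫ t in s..T, fw t) = 0 := by
          refine intervalIntegral.integral_undef ?_
          rw [intervalIntegrable_iff_integrableOn_Ioc_of_le hsT]
          exact hnJ s hs hss₀
        have := hzero s ⟨hs.le, hsT⟩
        rw [hg0] at this
        linarith
      have hfae : ∀ u v : ℝ, 0 < u → v < s₀ →
          (∀ᵐ x ∂(volume.restrict (Set.Ioc u v)), f x = 0) := by
        intro u v hu hv
        rcases le_or_gt u v with huv | hvu
        · have hvT : v ≤ T := hv.le.trans hs₀T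
          refine AV_ae_zero u v f
            ((AV_loc T f htf hu).mono_set (Set.Ioc_subset_Ioc_right hvT)) ?_
          intro p q hup hpq hqv
          have hp0 : 0 < p := hu.trans_le hup
          have hq0 : 0 < q := hp0.trans_le hpq
          have hqT : q ≤ T := (hqv.trans hv.le).trans hs₀T
          have hpT : p ≤ T := hpq.trans hqT
          have hIpq : IntervalIntegrable f volume p q :=
            (intervalIntegrable_iff_integrableOn_Ioc_of_le hpq).mpr
              ((AV_loc T f htf hp0).mono_set (Set.Ioc_subset_Ioc_right hqT))
          have hIqT : IntervalIntegrable f volume q T :=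
            (intervalIntegrable_iff_integrableOn_Ioc_of_le hqT).mpr (AV_loc T f htf hq0)
          have hsplit := intervalIntegral.integral_add_adjacent_intervals hIpq hIqT
          have h1 := hk0 p hp0 (lt_of_le_of_lt (hpq.trans hqv) hv)
          have h2 := hk0 q hq0 (lt_of_le_of_lt hqv hv)
          rw [← intervalIntegral.integral_of_le hpq]
          linarith
        · rw [Set.Ioc_eq_empty (not_lt.mpr hvu.le), Measure.restrict_empty]
          simp
      set s : ℝ := s₀ / 2 with hsdef
      have hs : 0 < s := by positivity
      have hss₀ : s < s₀ := half_lt_self hs₀pos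
      have hfw0 : ∀ᵐ x ∂(volume.restrict (Set.Ioo s s₀)), fw x = 0 := by
        refine AV_ae_glue _ _ measurableSet_Ioo
          (fun n => Set.Ioc s (s₀ - (s₀ - s) / (n + 1))) (fun n => measurableSet_Ioc)
          (AV_cover_init s s₀ hss₀) ?_
        intro n
        have hvlt : s₀ - (s₀ - s) / (n + 1) < s₀ := by
          have : 0 < (s₀ - s) / ((n:ℝ) + 1) := by
            apply div_pos (by linarith) (by positivity)
          linarith
        filter_upwards [hfae s (s₀ - (s₀ - s) / (n + 1)) hs hvlt] with x hx
        rw [hfwdef]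
        simp only
        rw [hx, zero_mul]
      have hfwIoo : IntegrableOn fw (Set.Ioo s s₀) := by
        have hz : IntegrableOn (fun _ : ℝ => (0:ℝ)) (Set.Ioo s s₀) := integrableOn_zero
        exact hz.congr_fun_ae (hfw0.mono fun x hx => hx.symm)
      have hfwIoc : IntegrableOn fw (Set.Ioc s s₀) := by
        rw [IntegrableOn, Measure.restrict_congr_set Ioo_ae_eq_Ioc] at hfwIoo
        exact hfwIoo
      have hfin : IntegrableOn fw (Set.Ioc s T) := by
        rw [← Set.Ioc_union_Ioc_eq_Ioc hss₀.le hs₀T]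
        exact hfwIoc.union hJ0
      exact hnJ s hs hss₀ hfin
    · -- ¬ J s₀ : then s₀ < T, fw locally integrable beyond s₀ and ae equal to -σ⁻¹ f
      have hs₀T' : s₀ < T := by
        rcases lt_or_eq_of_le hs₀T with h | h
        · exact h
        · exfalso
          apply hJ0
          rw [h, Set.Ioc_self]
          exact integrableOn_empty
      have hJs : ∀ s, s₀ < s → s ≤ T → IntegrableOn fw (Set.Ioc s T) := by
        intro s hs hsT
        by_contra hc
        have hsB : s ∈ B := ⟨hs₀pos.trans hs, hsT, hc⟩
        exact absurd (le_csSup hBbd hsB) (not_le.mpr hs)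
      have hae := AV_tail_ae T σ s₀ hs₀pos.le hs₀T' f w htf hJs hzero
      refine hJ0 ?_
      have h1 : IntegrableOn (fun t => -σ⁻¹ * f t) (Set.Ioc s₀ T) :=
        (AV_loc T f htf hs₀pos).const_mul _
      refine h1.congr_fun_ae ?_
      filter_upwards [hae] with x hx
      rw [hfwdef]
      simp only
      field_simp
      linarith

/-- Skorohod integral identity for Asian Vega:
`δ(1_{[0,T]} (∫₀ᵀ X_t W_t dt)/I_{(1)}) = (∫₀ᵀ X_t W_t dt / I_{(1)}) W_T
− σ(∫₀ᵀ t X_t W_t dt)/I_{(1)} − 1 + σ(∫₀ᵀ X_t W_t dt) I_{(2)}/I_{(1)}²`. -/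
theorem asian_vega_skorohod
    {Ω : Type*}
    (T σ : ℝ) (hT : 0 < T) (hσ : σ ≠ 0)
    (X : ℝ → Ω → ℝ) (W : ℝ → Ω → ℝ)
    (D : (Ω → ℝ) → ℝ → Ω → ℝ)
    (δ : (ℝ → Ω → ℝ) → Ω → ℝ)
    (I : ℕ → Ω → ℝ) (hI : ∀ n ω, I n ω = ∫ t in (0:ℝ)..T, t ^ n * X t ω)
    (hI1 : ∀ ω, I 1 ω ≠ 0)
    -- δ(F u) = F δ(u) − ∫₀ᵀ D_s F u_s ds
    (hfact : ∀ (F : Ω → ℝ) (u : ℝ → Ω → ℝ),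
      δ (fun s ω => F ω * u s ω)
        = fun ω => F ω * δ u ω - ∫ s in (0:ℝ)..T, D F s ω * u s ω)
    -- δ(1_{[0,T]}) = W_T
    (hδone : δ (fun s _ => Set.indicator (Set.Icc (0:ℝ) T) (fun _ => (1:ℝ)) s)
      = fun ω => W T ω)
    -- D_s ∫₀ᵀ X_t W_t dt = σ ∫ₛᵀ X_t W_t dt + ∫ₛᵀ X_t dt (from D_s(X_tW_t) = X_t(σW_t+1))
    (hDXW : ∀ ω, ∀ s ∈ Set.Icc (0:ℝ) T,
      D (fun ω => ∫ t in (0:ℝ)..T, X t ω * W t ω) s ω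
        = σ * (∫ t in s..T, X t ω * W t ω) + ∫ t in s..T, X t ω)
    -- ∫₀ᵀ D_s I_{(1)} ds = σ I_{(2)}
    (hDI1 : ∀ ω, (∫ s in (0:ℝ)..T, D (I 1) s ω) = σ * I 2 ω)
    -- quotient rule for D
    (hquot : ∀ F G : Ω → ℝ, D (fun ω => F ω / G ω)
      = fun s ω => (G ω * D F s ω - F ω * D G s ω) / (G ω) ^ 2) :
    δ (fun s ω => ((∫ t in (0:ℝ)..T, X t ω * W t ω) / I 1 ω) *
        Set.indicator (Set.Icc (0:ℝ) T) (fun _ => (1:ℝ)) s)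
      = fun ω => ((∫ t in (0:ℝ)..T, X t ω * W t ω) / I 1 ω) * W T ω
          - σ * (∫ t in (0:ℝ)..T, t * (X t ω * W t ω)) / I 1 ω - 1
          + σ * (∫ t in (0:ℝ)..T, X t ω * W t ω) * I 2 ω / (I 1 ω) ^ 2 := by
  funext ω
  have hδu := congrFun hδone ω
  have hne := hI1 ω
  -- integrability of t * X t ω
  have htX : IntegrableOn (fun t => t * X t ω) (Set.Ioc 0 T) := by
    rw [← intervalIntegrable_iff_integrableOn_Ioc_of_le hT.le]
    by_contra hc
    apply hI1 ω
    rw [hI 1 ω]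
    refine intervalIntegral.integral_undef ?_
    simpa [pow_one] using hc
  -- the central integral evaluation
  have hDA : (∫ s in (0:ℝ)..T, D (fun ω => ∫ t in (0:ℝ)..T, X t ω * W t ω) s ω)
      = σ * (∫ t in (0:ℝ)..T, t * (X t ω * W t ω)) + I 1 ω := by
    have hcongr : (∫ s in (0:ℝ)..T, D (fun ω => ∫ t in (0:ℝ)..T, X t ω * W t ω) s ω)
        = ∫ s in (0:ℝ)..T,
            (σ * (∫ t in s..T, X t ω * W t ω) + ∫ t in s..T, X t ω) := by
      refine intervalIntegral.integral_congr fun s hs => ?_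
      rw [Set.uIcc_of_le hT.le] at hs
      exact hDXW ω s hs
    by_cases hcase : IntegrableOn (fun t => t * (X t ω * W t ω)) (Set.Ioc 0 T)
    · have hfub1 := AV_fubini T hT (fun t => X t ω * W t ω)
        ((intervalIntegrable_iff_integrableOn_Ioc_of_le hT.le).mpr hcase)
      have hfub2 := AV_fubini T hT (fun t => X t ω)
        ((intervalIntegrable_iff_integrableOn_Ioc_of_le hT.le).mpr htX)
      rw [hcongr, intervalIntegral.integral_add (hfub1.1.const_mul σ) hfub2.1,
        intervalIntegral.integral_const_mul, hfub1.2, hfub2.2]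
      congr 1
      rw [hI 1 ω]
      exact intervalIntegral.integral_congr fun t _ => by simp [pow_one]
    · exfalso
      have hnXW : ¬ IntegrableOn (fun t => X t ω * W t ω) (Set.Ioc 0 T) := by
        intro hXW
        apply hcase
        refine Integrable.bdd_mul (c := T) hXW aestronglyMeasurable_id ?_
        filter_upwards [ae_restrict_mem measurableSet_Ioc] with t ht
        rw [Real.norm_eq_abs, abs_of_pos ht.1]
        exact ht.2
      have hA0 : (∫ t in (0:ℝ)..T, X t ω * W t ω) = 0 := by
        refine intervalIntegral.integral_undef ?_
        rw [intervalIntegrable_iff_integrableOn_Ioc_of_le hT.le]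
        exact hnXW
      have hzero : ∀ s ∈ Set.Icc (0:ℝ) T,
          σ * (∫ t in s..T, X t ω * W t ω) + (∫ t in s..T, X t ω) = 0 := by
        intro s hs
        rw [← hDXW ω s hs]
        exact AV_zero_rule D hquot (fun ω => ∫ t in (0:ℝ)..T, X t ω * W t ω) ω hA0 s
      exact AV_branchII T σ hT hσ (fun t => X t ω) (fun t => W t ω) htX hcase hzero
  -- δ of the product
  have h1 : δ (fun s ω => ((∫ t in (0:ℝ)..T, X t ω * W t ω) / I 1 ω) *
        Set.indicator (Set.Icc (0:ℝ) T) (fun _ => (1:ℝ)) s) ω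
      = ((∫ t in (0:ℝ)..T, X t ω * W t ω) / I 1 ω) *
          δ (fun s _ => Set.indicator (Set.Icc (0:ℝ) T) (fun _ => (1:ℝ)) s) ω
        - ∫ s in (0:ℝ)..T,
            D (fun ω => (∫ t in (0:ℝ)..T, X t ω * W t ω) / I 1 ω) s ω *
              Set.indicator (Set.Icc (0:ℝ) T) (fun _ => (1:ℝ)) s :=
    congrFun (hfact _ _) ω
  have hprod := AV_prod_int T D δ hfact
      (fun ω => (∫ t in (0:ℝ)..T, X t ω * W t ω) / I 1 ω) (I 1)
      (fun s _ => Set.indicator (Set.Icc (0:ℝ) T) (fun _ => (1:ℝ)) s) ω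
  have hQI : (fun ω => ((∫ t in (0:ℝ)..T, X t ω * W t ω) / I 1 ω) * I 1 ω)
      = (fun ω => ∫ t in (0:ℝ)..T, X t ω * W t ω) := by
    funext ω'
    exact div_mul_cancel₀ _ (hI1 ω')
  rw [hQI] at hprod
  have hdrop : ∀ h : ℝ → ℝ,
      (∫ s in (0:ℝ)..T, h s * Set.indicator (Set.Icc (0:ℝ) T) (fun _ => (1:ℝ)) s)
        = ∫ s in (0:ℝ)..T, h s := by
    intro h
    refine intervalIntegral.integral_congr fun s hs => ?_
    rw [Set.uIcc_of_le hT.le] at hs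
    rw [Set.indicator_of_mem hs, mul_one]
  rw [hdrop (fun s => D (fun ω => ∫ t in (0:ℝ)..T, X t ω * W t ω) s ω),
    hdrop (fun s => D (I 1) s ω),
    hdrop (fun s => D (fun ω => (∫ t in (0:ℝ)..T, X t ω * W t ω) / I 1 ω) s ω)]
    at hprod
  rw [hdrop (fun s => D (fun ω => (∫ t in (0:ℝ)..T, X t ω * W t ω) / I 1 ω) s ω)] at h1
  rw [hDI1 ω, hDA] at hprod
  -- solve for the remaining integral and finish
  have hDQ : (∫ s in (0:ℝ)..T,
        D (fun ω => (∫ t in (0:ℝ)..T, X t ω * W t ω) / I 1 ω) s ω)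
      = (σ * (∫ t in (0:ℝ)..T, t * (X t ω * W t ω)) + I 1 ω
          - ((∫ t in (0:ℝ)..T, X t ω * W t ω) / I 1 ω) * (σ * I 2 ω)) / I 1 ω := by
    rw [eq_div_iff hne]
    linarith [hprod]
  rw [h1, hδu, hDQ]
  field_simp
  ring
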